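/- arXiv:2302.07377 — 2 statements merged into one kernel-verified Lean document; each statement's English description precedes it below -/
import Mathlib

section
/- The function h(x,y) = |x−y| / (√(1+|x|²)·√(1+|y|²)) defines a metric on ℝⁿ; in particular it satisfies the triangle inequality. -/
noncomputable def chordal {n : ℕ} (x y : EuclideanSpace ℝ (Fin n)) : ℝ :=
  ‖x - y‖ / (Real.sqrt (1 + ‖x‖ ^ 2) * Real.sqrt (1 + ‖y‖ ^ 2))

noncomputable def gmap {n : ℕ} (x : EuclideanSpace ℝ (Fin n)) :
    WithLp 2 (EuclideanSpace ℝ (Fin n) × ℝ) :=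
  (1 / (1 + ‖x‖ ^ 2)) • (WithLp.equiv 2 _).symm (x, 1)

lemma one_add_sq_pos {n : ℕ} (x : EuclideanSpace ℝ (Fin n)) : (0:ℝ) < 1 + ‖x‖ ^ 2 := by
  positivity

lemma gmap_norm_sq {n : ℕ} (x : EuclideanSpace ℝ (Fin n)) :
    ‖gmap x‖ ^ 2 = 1 / (1 + ‖x‖ ^ 2) := by
  have hs := one_add_sq_pos x
  rw [gmap, norm_smul, mul_pow, WithLp.prod_norm_sq_eq_of_L2]
  simp only [WithLp.equiv_symm_apply, WithLp.toLp_fst, WithLp.toLp_snd, norm_one]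
  rw [Real.norm_eq_abs, abs_of_pos (by positivity)]
  field_simp
  ring

lemma gmap_inner {n : ℕ} (x y : EuclideanSpace ℝ (Fin n)) :
    inner ℝ (gmap x) (gmap y) =
      (1 / (1 + ‖x‖ ^ 2)) * (1 / (1 + ‖y‖ ^ 2)) * (inner ℝ x y + 1 : ℝ) := by
  rw [gmap, gmap, real_inner_smul_left, real_inner_smul_right, WithLp.prod_inner_apply]
  simp only [WithLp.equiv_symm_apply, WithLp.toLp_fst, WithLp.toLp_snd]
  norm_num
  ring

lemma chordal_eq_dist {n : ℕ} (x y : EuclideanSpace ℝ (Fin n)) :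
    chordal x y = ‖gmap x - gmap y‖ := by
  have hx := one_add_sq_pos x
  have hy := one_add_sq_pos y
  have hsx : Real.sqrt (1 + ‖x‖ ^ 2) > 0 := Real.sqrt_pos.mpr hx
  have hsy : Real.sqrt (1 + ‖y‖ ^ 2) > 0 := Real.sqrt_pos.mpr hy
  have h1 : chordal x y ≥ 0 := by
    unfold chordal; positivity
  have h2 : ‖gmap x - gmap y‖ ≥ 0 := norm_nonneg _
  have hsq : chordal x y ^ 2 = ‖gmap x - gmap y‖ ^ 2 := by
    rw [@norm_sub_sq_real, gmap_norm_sq, gmap_norm_sq, gmap_inner]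
    unfold chordal
    rw [div_pow, mul_pow, Real.sq_sqrt hx.le, Real.sq_sqrt hy.le,
      @norm_sub_sq_real]
    field_simp
    ring
  nlinarith [hsq, h1, h2]

theorem chordal_is_metric {n : ℕ} :
    (∀ x y : EuclideanSpace ℝ (Fin n), 0 ≤ chordal x y) ∧
    (∀ x y : EuclideanSpace ℝ (Fin n), chordal x y = 0 ↔ x = y) ∧
    (∀ x y : EuclideanSpace ℝ (Fin n), chordal x y = chordal y x) ∧
    (∀ x y z : EuclideanSpace ℝ (Fin n), chordal x z ≤ chordal x y + chordal y z) := by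
  refine ⟨fun x y => by unfold chordal; positivity, fun x y => ?_, fun x y => ?_, fun x y z => ?_⟩
  · have hx := one_add_sq_pos x
    have hy := one_add_sq_pos y
    constructor
    · intro h
      unfold chordal at h
      have hne : Real.sqrt (1 + ‖x‖ ^ 2) * Real.sqrt (1 + ‖y‖ ^ 2) ≠ 0 := by
        positivity
      field_simp at h
      exact sub_eq_zero.mp (norm_eq_zero.mp (by rw [h, mul_zero]))
    · rintro rfl
      unfold chordal
      simp
  · unfold chordal
    rw [norm_sub_rev, mul_comm]
  · rw [chordal_eq_dist, chordal_eq_dist, chordal_eq_dist]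
    have : gmap x - gmap z = (gmap x - gmap y) + (gmap y - gmap z) := by abel
    rw [this]
    exact norm_add_le _ _
end

section
/- Every bounded convex domain in ℝⁿ with nonempty interior having a designated center point satisfies: for any z₀ ∈ ∂D₁, y* ∈ D₁ with δ* = dist(y*, ∂D₁), and any two points A, B ∈ B(z₀, δ*/8) ∩ D₁, there exist points C, D ∈ B̄(y*, δ*/2) such that the segments [A,C] and [B,D] lie in D₁ and dist([A,C],[B,D]) ≥ C₀·|A−B| for a constant C₀ > 0 depending only on δ* and diam(D₁). -/
set_option maxHeartbeats 1000000

open RealInnerProductSpace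

noncomputable def setDist {n : ℕ} (A B : Set (EuclideanSpace ℝ (Fin n))) : ℝ :=
  ⨅ p : A × B, dist (p.1 : EuclideanSpace ℝ (Fin n)) (p.2 : EuclideanSpace ℝ (Fin n))

private lemma setDist_nonneg' {n : ℕ} (A B : Set (EuclideanSpace ℝ (Fin n))) :
    0 ≤ setDist A B :=
  Real.iInf_nonneg fun _ => dist_nonneg

private lemma setDist_comm' {n : ℕ} (A B : Set (EuclideanSpace ℝ (Fin n)))
    (hA : A.Nonempty) (hB : B.Nonempty) : setDist A B = setDist B A := by
  have key : ∀ (S T : Set (EuclideanSpace ℝ (Fin n))), S.Nonempty → T.Nonempty →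
      setDist S T ≤ setDist T S := by
    intro S T hS hT
    haveI : Nonempty S := hS.to_subtype
    haveI : Nonempty T := hT.to_subtype
    refine le_ciInf fun p => ?_
    have hbdd : BddBelow (Set.range fun q : S × T =>
        dist (q.1 : EuclideanSpace ℝ (Fin n)) (q.2 : EuclideanSpace ℝ (Fin n))) := by
      refine ⟨0, ?_⟩
      rintro x ⟨q, rfl⟩
      exact dist_nonneg
    have := ciInf_le hbdd (⟨p.2, p.1⟩ : S × T)
    rw [setDist]
    simpa [dist_comm] using this
  exact le_antisymm (key A B hA hB) (key B A hB hA)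

/-- The key elementary real inequality. -/
private lemma real_key (ε ρ d a b s t X Y N : ℝ)
    (hε : 0 < ε) (hερ : ε ≤ ρ) (hρd : ρ ≤ d)
    (ha : |a| ≤ d * ε) (ha2 : a ≤ ε ^ 2 / 2)
    (hb0 : 0 ≤ b) (hbd : b ≤ d)
    (hs0 : 0 ≤ s) (hs1 : s ≤ 1) (ht0 : 0 ≤ t) (ht1 : t ≤ 1)
    (hX : X = (1 - t) * ε ^ 2 + (t - s) * a)
    (hY : Y = (t - s) * b + (s + t) * ρ)
    (hXN : |X| ≤ ε * N) (hYN : |Y| ≤ N) :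
    ε * ρ ≤ 8 * d * N := by
  have hXle : X ≤ ε * N := le_trans (le_abs_self X) hXN
  have hYle : Y ≤ N := le_trans (le_abs_self Y) hYN
  have hNn : 0 ≤ N := le_trans (abs_nonneg Y) hYN
  have hρ0 : 0 < ρ := lt_of_lt_of_le hε hερ
  have hd0 : 0 < d := lt_of_lt_of_le hρ0 hρd
  have hεd : ε ≤ d := le_trans hερ hρd
  have hna : -(d * ε) ≤ a := neg_le_of_abs_le ha
  rcases le_or_gt s t with hst | hst
  · -- Case 1 : s ≤ t
    rcases le_or_gt ε (2 * (d + ρ) * (s + t)) with hc | hc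
    · -- 1a
      have h1 : (s + t) * ρ ≤ Y := by nlinarith [mul_nonneg (sub_nonneg.2 hst) hb0]
      have h2 : (s + t) * ρ ≤ N := le_trans h1 hYle
      nlinarith [mul_le_mul_of_nonneg_left h2 (by positivity : (0:ℝ) ≤ 8 * d),
        mul_le_mul_of_nonneg_right hc hρ0.le]
    · -- 1b : X ≥ ε²/2
      have hX2 : ε ^ 2 / 2 ≤ X := by
        have h1 : -((t - s) * (d * ε)) ≤ (t - s) * a :=
          le_trans (by nlinarith [mul_le_mul_of_nonneg_left hna (sub_nonneg.2 hst)]) le_rfl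
        nlinarith [mul_lt_mul_of_pos_right hc hε, mul_nonneg hs0 hε.le,
          mul_nonneg ht0 hε.le, mul_nonneg (mul_nonneg hs0 hε.le) hε.le,
          mul_nonneg (mul_nonneg ht0 hε.le) hε.le,
          mul_nonneg (mul_nonneg hs0 hd0.le) hε.le]
      have hN2 : ε / 2 ≤ N := by
        have h2 : ε * (ε / 2) ≤ ε * N := by
          have hr : ε * (ε / 2) = ε ^ 2 / 2 := by ring
          linarith
        exact le_of_mul_le_mul_left h2 hε
      nlinarith [mul_le_mul_of_nonneg_left hN2 (by positivity : (0:ℝ) ≤ 8 * d),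
        mul_le_mul_of_nonneg_right hρd hε.le]
  · -- Case 2 : t < s
    have hts : 0 ≤ s - t := by linarith
    have hXlb : (1 - t) * ε ^ 2 - (s - t) * (ε ^ 2 / 2) ≤ X := by
      have h1 := mul_le_mul_of_nonneg_left ha2 hts
      nlinarith
    rcases le_or_gt (4 * t) 1 with htq | htq
    · -- 2a
      have hX4 : ε ^ 2 / 4 ≤ X := by nlinarith [sq_nonneg ε]
      have hN4 : ε / 4 ≤ N := by
        have h2 : ε * (ε / 4) ≤ ε * N := by
          have hr : ε * (ε / 4) = ε ^ 2 / 4 := by ring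
          linarith
        exact le_of_mul_le_mul_left h2 hε
      nlinarith [mul_le_mul_of_nonneg_left hN4 (by positivity : (0:ℝ) ≤ 8 * d),
        mul_le_mul_of_nonneg_right hρd hε.le]
    · rcases le_or_gt b ρ with hbρ | hbρ
      · -- 2b
        have hY2 : ρ / 2 ≤ Y := by nlinarith [mul_le_mul_of_nonneg_left hbρ hts]
        have hN2 : ρ / 2 ≤ N := le_trans hY2 hYle
        nlinarith [mul_le_mul_of_nonneg_left hN2 (by positivity : (0:ℝ) ≤ 8 * d),
          mul_le_mul_of_nonneg_right hεd hρ0.le]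
      · -- 2c
        rcases le_or_gt (ε * ρ) (8 * d * N) with h | h
        · exact h
        · exfalso
          have hYge : -N ≤ Y := neg_le_of_abs_le hYN
          -- N < ε*ρ/(8 d) ≤ ρ/8, so Y > -ρ/8 is not needed; we need Y < ρ/8
          have hNsmall : 8 * d * N < ε * ρ := h
          -- (s-t)*b = (s+t)*ρ - Y ≥ ρ/2 - N*?  : use Y ≤ N and N < ερ/(8d) ≤ ρ/8
          have hNρ : N < ρ / 8 := by nlinarith [mul_le_mul_of_nonneg_right hεd hρ0.le]
          have h38 : 3 * ρ / 8 < (s - t) * b := by nlinarith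
          have h38d : 3 * ρ / 8 < (s - t) * d := by
            calc 3 * ρ / 8 < (s - t) * b := h38
            _ ≤ (s - t) * d := mul_le_mul_of_nonneg_left hbd hts
          have h1t : 3 * ρ / 8 < (1 - t) * d := by nlinarith
          have hXlb2 : (1 - t) * ε ^ 2 / 2 ≤ X := by nlinarith [sq_nonneg ε]
          -- ε N ≥ X ≥ (1-t) ε²/2, multiply by d
          nlinarith [mul_le_mul_of_nonneg_left hXle hd0.le,
            mul_le_mul_of_nonneg_left hXlb2 hd0.le,
            mul_lt_mul_of_pos_right h1t (by positivity : (0:ℝ) < ε ^ 2 / 2)]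

private lemma exists_frontier_point {n : ℕ} (D : Set (EuclideanSpace ℝ (Fin n)))
    (hD : IsOpen D) {y x : EuclideanSpace ℝ (Fin n)} (hy : y ∈ D) (hx : x ∉ D) :
    ∃ p ∈ frontier D, dist y p ≤ dist y x := by
  set γ : ℝ → EuclideanSpace ℝ (Fin n) := fun u => y + u • (x - y) with hγdef
  have hγ : Continuous γ := by
    apply Continuous.add continuous_const
    exact (continuous_id.smul continuous_const)
  set S : Set ℝ := Set.Icc 0 1 ∩ γ ⁻¹' Dᶜ with hSdef
  have hSclosed : IsClosed S := isClosed_Icc.inter (hD.isClosed_compl.preimage hγ)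
  have h1S : (1 : ℝ) ∈ S := by
    constructor
    · exact ⟨zero_le_one, le_refl 1⟩
    · simp only [Set.mem_preimage, hγdef, one_smul]
      intro h
      apply hx
      convert h using 2
      abel
  have hSne : S.Nonempty := ⟨1, h1S⟩
  have hSbdd : BddBelow S := ⟨0, fun u hu => hu.1.1⟩
  set c := sInf S with hcdef
  have hcS : c ∈ S := hSclosed.csInf_mem hSne hSbdd
  have hc0 : 0 ≤ c := hcS.1.1
  have hc1 : c ≤ 1 := hcS.1.2
  have hγc : γ c ∉ D := hcS.2
  have hcpos : 0 < c := by
    rcases lt_or_eq_of_le hc0 with h | h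
    · exact h
    · exfalso; apply hγc; rw [← h]
      simpa [hγdef] using hy
  refine ⟨γ c, ?_, ?_⟩
  · rw [frontier_eq_closure_inter_closure]
    constructor
    · -- γ c ∈ closure D : approximate from below
      have hseq : ∀ k : ℕ, γ (c - c / (k + 1)) ∈ D := by
        intro k
        have hklt : c - c / (k + 1) < c := by
          have : 0 < c / (k + 1) := by positivity
          linarith
        have hk0 : 0 ≤ c - c / (k + 1) := by
          have h1 : c / ((k : ℝ) + 1) ≤ c :=
            div_le_self hc0 (by linarith [Nat.cast_nonneg (α := ℝ) k])
          linarith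
        by_contra hnot
        have : c - c / (k + 1) ∈ S := ⟨⟨hk0, by linarith⟩, hnot⟩
        have := csInf_le hSbdd this
        linarith
      have htend : Filter.Tendsto (fun k : ℕ => γ (c - c / (k + 1))) Filter.atTop
          (nhds (γ c)) := by
        apply (hγ.continuousAt).tendsto.comp
        have h0 : Filter.Tendsto (fun k : ℕ => c / ((k : ℝ) + 1)) Filter.atTop (nhds 0) := by
          have := (tendsto_const_div_atTop_nhds_zero_nat c).comp (Filter.tendsto_add_atTop_nat 1)
          simpa only [Function.comp_def, Nat.cast_add, Nat.cast_one] using this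
        have := Filter.Tendsto.const_sub c h0
        simpa using this
      exact mem_closure_of_tendsto htend (Filter.Eventually.of_forall fun k => hseq k)
    · exact subset_closure hγc
  · have h1 : y - γ c = (-c) • (x - y) := by
      simp only [hγdef]
      module
    rw [dist_eq_norm, dist_eq_norm, h1, norm_smul]
    have h2 : ‖y - x‖ = ‖x - y‖ := norm_sub_rev y x
    rw [h2]
    have : |(-c : ℝ)| = c := by rw [abs_neg, abs_of_nonneg hc0]
    rw [Real.norm_eq_abs, this]
    nlinarith [norm_nonneg (x - y)]

private lemma exists_unit_perp {n : ℕ} (hn : 2 ≤ n)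
    (v w : EuclideanSpace ℝ (Fin n)) (hv : v ≠ 0) :
    ∃ e : EuclideanSpace ℝ (Fin n), ‖e‖ = 1 ∧ ⟪v, e⟫ = 0 ∧ 0 ≤ ⟪w, e⟫ := by
  have hv2 : (0:ℝ) < ‖v‖ ^ 2 := pow_pos (norm_pos_iff.2 hv) 2
  have perp : ∀ y : EuclideanSpace ℝ (Fin n),
      ⟪v, y - (⟪v, y⟫ / ‖v‖ ^ 2) • v⟫ = 0 := by
    intro y
    rw [inner_sub_right, real_inner_smul_right, real_inner_self_eq_norm_sq]
    field_simp
    ring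
  by_cases hw : w - (⟪v, w⟫ / ‖v‖ ^ 2) • v = 0
  · -- w is a multiple of v : pick any unit vector orthogonal to v
    have hspan : Submodule.span ℝ {v} ≠ ⊤ := by
      intro h
      have h1 : Module.finrank ℝ (Submodule.span ℝ {v}) = 1 := finrank_span_singleton hv
      rw [h] at h1
      rw [finrank_top] at h1
      rw [finrank_euclideanSpace_fin] at h1
      omega
    obtain ⟨x, hx⟩ : ∃ x, x ∉ Submodule.span ℝ {v} := by
      by_contra h
      push_neg at h
      exact hspan (Submodule.eq_top_iff'.2 h)
    set x' := x - (⟪v, x⟫ / ‖v‖ ^ 2) • v with hx'def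
    have hx' : x' ≠ 0 := by
      intro h0
      apply hx
      have : x = (⟪v, x⟫ / ‖v‖ ^ 2) • v := by
        have := sub_eq_zero.1 h0
        exact this
      rw [this]
      exact Submodule.smul_mem _ _ (Submodule.mem_span_singleton_self v)
    refine ⟨‖x'‖⁻¹ • x', ?_, ?_, ?_⟩
    · rw [norm_smul, norm_inv, norm_norm]
      exact inv_mul_cancel₀ (norm_ne_zero_iff.2 hx')
    · rw [real_inner_smul_right, perp x]
      ring
    · have hwv : w = (⟪v, w⟫ / ‖v‖ ^ 2) • v := by
        have := sub_eq_zero.1 hw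
        exact this
      rw [hwv, real_inner_smul_left, real_inner_smul_right, perp x]
      simp
  · refine ⟨‖w - (⟪v, w⟫ / ‖v‖ ^ 2) • v‖⁻¹ • (w - (⟪v, w⟫ / ‖v‖ ^ 2) • v), ?_, ?_, ?_⟩
    · rw [norm_smul, norm_inv, norm_norm]
      exact inv_mul_cancel₀ (norm_ne_zero_iff.2 hw)
    · rw [real_inner_smul_right, perp w]
      ring
    · set w' := w - (⟪v, w⟫ / ‖v‖ ^ 2) • v with hw'def
      have hdecomp : w = w' + (⟪v, w⟫ / ‖v‖ ^ 2) • v := by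
        rw [hw'def]; abel
      have hinner : ⟪w, w'⟫ = ‖w'‖ ^ 2 := by
        nth_rewrite 1 [hdecomp]
        have hp : ⟪v, w'⟫ = (0:ℝ) := perp w
        rw [inner_add_left, real_inner_smul_left, hp, real_inner_self_eq_norm_sq]
        ring
      rw [real_inner_smul_right, hinner]
      positivity

private lemma closedBall_subset_domain {n : ℕ} (D₁ : Set (EuclideanSpace ℝ (Fin n)))
    (hopen : IsOpen D₁) (ys : EuclideanSpace ℝ (Fin n)) (hys : ys ∈ D₁)
    (δs : ℝ) (hδs : δs = Metric.infDist ys (frontier D₁)) (hδpos : 0 < δs) :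
    Metric.closedBall ys (δs / 2) ⊆ D₁ := by
  intro x hx
  by_contra hxD
  obtain ⟨p, hpf, hpd⟩ := exists_frontier_point D₁ hopen hys hxD
  have h1 : δs ≤ dist ys p := by
    rw [hδs]
    exact Metric.infDist_le_dist_of_mem hpf
  have h2 : dist ys x ≤ δs / 2 := by
    rw [dist_comm]
    exact Metric.mem_closedBall.1 hx
  linarith

private lemma aux_main {n : ℕ} (hn : 2 ≤ n)
    (D₁ : Set (EuclideanSpace ℝ (Fin n)))
    (hopen : IsOpen D₁) (hbdd : Bornology.IsBounded D₁) (hconv : Convex ℝ D₁)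
    (z₀ : EuclideanSpace ℝ (Fin n)) (hz₀ : z₀ ∈ frontier D₁)
    (ys : EuclideanSpace ℝ (Fin n)) (hys : ys ∈ D₁)
    (δs : ℝ) (hδs : δs = Metric.infDist ys (frontier D₁)) (hδpos : 0 < δs)
    (A B : EuclideanSpace ℝ (Fin n))
    (hA : A ∈ Metric.ball z₀ (δs / 8) ∩ D₁) (hB : B ∈ Metric.ball z₀ (δs / 8) ∩ D₁)
    (hAB : A ≠ B) (hside : ⟪ys - A, B - A⟫ ≤ ‖B - A‖ ^ 2 / 2) :
    ∃ C ∈ Metric.closedBall ys (δs / 2), ∃ D ∈ Metric.closedBall ys (δs / 2),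
      segment ℝ A C ⊆ D₁ ∧ segment ℝ B D ⊆ D₁ ∧
      (δs / (32 * Metric.diam D₁)) * ‖A - B‖ ≤
        setDist (segment ℝ A C) (segment ℝ B D) := by
  set d := Metric.diam D₁ with hddef
  have hdδ : δs ≤ d := by
    have h1 : δs ≤ dist ys z₀ := by
      rw [hδs]; exact Metric.infDist_le_dist_of_mem hz₀
    have h2 : dist ys z₀ ≤ Metric.diam (closure D₁) :=
      Metric.dist_le_diam_of_mem hbdd.closure (subset_closure hys)
        (frontier_subset_closure hz₀)
    rw [Metric.diam_closure] at h2
    linarith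
  have hd0 : 0 < d := lt_of_lt_of_le hδpos hdδ
  have hball := closedBall_subset_domain D₁ hopen ys hys δs hδs hδpos
  set ρ := δs / 4 with hρdef
  have hρ0 : 0 < ρ := by positivity
  set v := B - A with hvdef
  have hv : v ≠ 0 := sub_ne_zero.2 hAB.symm
  set ε := ‖v‖ with hεdef
  have hε0 : 0 < ε := norm_pos_iff.2 hv
  set w := ys - A with hwdef
  obtain ⟨e, he1, hev, hew0⟩ := exists_unit_perp hn v w hv
  set C : EuclideanSpace ℝ (Fin n) := ys - ρ • e with hCdef
  set D : EuclideanSpace ℝ (Fin n) := ys + ρ • e with hDdef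
  have hCmem : C ∈ Metric.closedBall ys (δs / 2) := by
    rw [Metric.mem_closedBall, dist_eq_norm]
    have : C - ys = -(ρ • e) := by rw [hCdef]; abel
    rw [this, norm_neg, norm_smul, he1, Real.norm_eq_abs, abs_of_pos hρ0]
    rw [hρdef]; linarith
  have hDmem : D ∈ Metric.closedBall ys (δs / 2) := by
    rw [Metric.mem_closedBall, dist_eq_norm]
    have : D - ys = ρ • e := by rw [hDdef]; abel
    rw [this, norm_smul, he1, Real.norm_eq_abs, abs_of_pos hρ0]
    rw [hρdef]; linarith
  have hCD₁ : C ∈ D₁ := hball hCmem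
  have hDD₁ : D ∈ D₁ := hball hDmem
  refine ⟨C, hCmem, D, hDmem, hconv.segment_subset hA.2 hCD₁,
    hconv.segment_subset hB.2 hDD₁, ?_⟩
  -- quantitative bounds
  have hwd : ‖w‖ ≤ d := by
    rw [hwdef, ← dist_eq_norm]
    exact Metric.dist_le_diam_of_mem hbdd hys hA.2
  have hερ : ε ≤ ρ := by
    have h1 : dist B A ≤ dist B z₀ + dist z₀ A := dist_triangle B z₀ A
    have h2 : dist B z₀ < δs / 8 := Metric.mem_ball.1 hB.1
    have h3 : dist z₀ A < δs / 8 := by rw [dist_comm]; exact Metric.mem_ball.1 hA.1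
    have h4 : dist B A = ε := by rw [hεdef, hvdef, dist_eq_norm]
    rw [hρdef]; linarith
  set a := ⟪w, v⟫ with hadef
  set b := ⟪w, e⟫ with hbdef
  have ha : |a| ≤ d * ε := by
    calc |a| ≤ ‖w‖ * ‖v‖ := abs_real_inner_le_norm w v
    _ ≤ d * ε := by
        apply mul_le_mul_of_nonneg_right hwd (norm_nonneg v)
  have ha2 : a ≤ ε ^ 2 / 2 := hside
  have hb0 : 0 ≤ b := hew0
  have hbd : b ≤ d := by
    calc b ≤ |b| := le_abs_self b
    _ ≤ ‖w‖ * ‖e‖ := abs_real_inner_le_norm w e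
    _ = ‖w‖ := by rw [he1, mul_one]
    _ ≤ d := hwd
  -- the infimum bound
  haveI : Nonempty (segment ℝ A C) := ⟨⟨A, left_mem_segment ℝ A C⟩⟩
  haveI : Nonempty (segment ℝ B D) := ⟨⟨B, left_mem_segment ℝ B D⟩⟩
  rw [setDist]
  refine le_ciInf fun p => ?_
  obtain ⟨P, hP⟩ := p.1
  obtain ⟨Q, hQ⟩ := p.2
  rw [segment_eq_image'] at hP hQ
  obtain ⟨s, hs, hPdef⟩ := hP
  obtain ⟨t, ht, hQdef⟩ := hQ
  simp only []
  set N := dist P Q with hNdef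
  have hNnorm : N = ‖Q - P‖ := by rw [hNdef, dist_eq_norm, norm_sub_rev]
  have hQP : Q - P = (1 - t) • v + (t - s) • w + ((s + t) * ρ) • e := by
    rw [← hQdef, ← hPdef, hCdef, hDdef, hvdef, hwdef]
    module
  have hXeq : ⟪Q - P, v⟫ = (1 - t) * ε ^ 2 + (t - s) * a := by
    have hev' : ⟪e, v⟫ = (0:ℝ) := by rw [real_inner_comm]; exact hev
    rw [hQP, inner_add_left, inner_add_left, real_inner_smul_left,
      real_inner_smul_left, real_inner_smul_left, real_inner_self_eq_norm_sq,
      hev', ← hadef, ← hεdef]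
    ring
  have hYeq : ⟪Q - P, e⟫ = (t - s) * b + (s + t) * ρ := by
    have hee : ⟪e, e⟫ = (1:ℝ) := by
      rw [real_inner_self_eq_norm_sq, he1]; norm_num
    rw [hQP, inner_add_left, inner_add_left, real_inner_smul_left,
      real_inner_smul_left, real_inner_smul_left, hev, hee, ← hbdef]
    ring
  have hXN : |⟪Q - P, v⟫| ≤ ε * N := by
    calc |⟪Q - P, v⟫| ≤ ‖Q - P‖ * ‖v‖ := abs_real_inner_le_norm _ _
    _ = ε * N := by rw [hNnorm, hεdef]; ring
  have hYN : |⟪Q - P, e⟫| ≤ N := by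
    calc |⟪Q - P, e⟫| ≤ ‖Q - P‖ * ‖e‖ := abs_real_inner_le_norm _ _
    _ = N := by rw [hNnorm, he1, mul_one]
  have hkey := real_key ε ρ d a b s t (⟪Q - P, v⟫) (⟪Q - P, e⟫) N hε0 hερ
    (le_trans (by linarith) hdδ) ha ha2 hb0 hbd hs.1 hs.2 ht.1 ht.2 hXeq hYeq hXN hYN
  have hAB' : ‖A - B‖ = ε := by rw [hεdef, hvdef, norm_sub_rev]
  rw [hAB']
  rw [div_mul_eq_mul_div, div_le_iff₀ (by positivity)]
  nlinarith

theorem convex_domain_separated_segments {n : ℕ} (hn : 2 ≤ n)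
    (D₁ : Set (EuclideanSpace ℝ (Fin n)))
    (hopen : IsOpen D₁) (hbdd : Bornology.IsBounded D₁) (hconv : Convex ℝ D₁)
    (hne : D₁.Nonempty)
    (z₀ : EuclideanSpace ℝ (Fin n)) (hz₀ : z₀ ∈ frontier D₁)
    (ys : EuclideanSpace ℝ (Fin n)) (hys : ys ∈ D₁)
    (δs : ℝ) (hδs : δs = Metric.infDist ys (frontier D₁)) (hδpos : 0 < δs) :
    ∃ C₀ : ℝ, 0 < C₀ ∧
      ∀ A ∈ Metric.ball z₀ (δs / 8) ∩ D₁, ∀ B ∈ Metric.ball z₀ (δs / 8) ∩ D₁,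
        ∃ C ∈ Metric.closedBall ys (δs / 2), ∃ D ∈ Metric.closedBall ys (δs / 2),
          segment ℝ A C ⊆ D₁ ∧ segment ℝ B D ⊆ D₁ ∧
          C₀ * ‖A - B‖ ≤ setDist (segment ℝ A C) (segment ℝ B D) := by
  have hdδ : δs ≤ Metric.diam D₁ := by
    have h1 : δs ≤ dist ys z₀ := by
      rw [hδs]; exact Metric.infDist_le_dist_of_mem hz₀
    have h2 : dist ys z₀ ≤ Metric.diam (closure D₁) :=
      Metric.dist_le_diam_of_mem hbdd.closure (subset_closure hys)
        (frontier_subset_closure hz₀)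
    rw [Metric.diam_closure] at h2
    linarith
  have hd0 : 0 < Metric.diam D₁ := lt_of_lt_of_le hδpos hdδ
  refine ⟨δs / (32 * Metric.diam D₁), by positivity, ?_⟩
  intro A hA B hB
  rcases eq_or_ne A B with rfl | hAB
  · refine ⟨ys, ?_, ys, ?_, hconv.segment_subset hA.2 hys,
      hconv.segment_subset hA.2 hys, ?_⟩
    · rw [Metric.mem_closedBall, dist_self]; positivity
    · rw [Metric.mem_closedBall, dist_self]; positivity
    · rw [sub_self, norm_zero, mul_zero]
      exact setDist_nonneg' _ _
  · rcases le_or_gt (⟪ys - A, B - A⟫ : ℝ) (‖B - A‖ ^ 2 / 2) with hside | hside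
    · exact aux_main hn D₁ hopen hbdd hconv z₀ hz₀ ys hys δs hδs hδpos A B hA hB hAB hside
    · have hside' : (⟪ys - B, A - B⟫ : ℝ) ≤ ‖A - B‖ ^ 2 / 2 := by
        have h1 : (⟪ys - B, A - B⟫ : ℝ) = ‖B - A‖ ^ 2 - ⟪ys - A, B - A⟫ := by
          have e1 : ys - B = (ys - A) - (B - A) := by abel
          have e2 : A - B = -(B - A) := by abel
          rw [e1, e2, inner_neg_right, inner_sub_left, real_inner_self_eq_norm_sq]
          ring
        rw [h1, norm_sub_rev A B]
        linarith
      obtain ⟨C, hC, D, hD, hsegBC, hsegAD, hbound⟩ :=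
        aux_main hn D₁ hopen hbdd hconv z₀ hz₀ ys hys δs hδs hδpos B A hB hA hAB.symm hside'
      refine ⟨D, hD, C, hC, hsegAD, hsegBC, ?_⟩
      rw [setDist_comm' _ _ ⟨A, left_mem_segment ℝ A D⟩ ⟨B, left_mem_segment ℝ B C⟩,
        norm_sub_rev A B]
      exact hbound
end
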